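/- The family of all trees over ω containing a Laver tree, regarded as a subset of the Polish space Tree_ω, is Σ¹₁-complete: it is analytic, and for every Polish space Y and every analytic set B ⊆ Y there is a Borel measurable function f : Y → Tree_ω whose preimage of this family equals B. -/

import Mathlib

open MeasureTheory

/-- The Polish space `Tree_ω` of all trees over `ω`. -/
abbrev TreeOmega : Type :=
  {x : List ℕ → Bool // ∀ σ τ : List ℕ, x σ = true → τ <+: σ → x τ = true}

/-- `S ⊆ ω^{<ω}` is a tree: closed under initial segments. -/
def IsTreeSet (S : Set (List ℕ)) : Prop :=
  ∀ σ ∈ S, ∀ τ : List ℕ, τ <+: σ → τ ∈ S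

/-- A Laver tree: a tree with a stem `σ` above which every node is
infinitely splitting. -/
def IsLaverTree (S : Set (List ℕ)) : Prop :=
  IsTreeSet S ∧ ∃ σ ∈ S, ∀ τ ∈ S, σ <+: τ → {n : ℕ | τ ++ [n] ∈ S}.Infinite

/-- The family of all trees over `ω` containing a Laver tree. -/
def laverFam : Set TreeOmega :=
  {T | ∃ S : Set (List ℕ), IsLaverTree S ∧ S ⊆ {σ | T.1 σ = true}}

namespace LaverAux

open Set

def pre (x : ℕ → ℕ) (n : ℕ) : List ℕ := (List.range n).map x

@[simp] lemma pre_length (x : ℕ → ℕ) (n : ℕ) : (pre x n).length = n := by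
  simp [pre]

lemma pre_take (x : ℕ → ℕ) {n m : ℕ} (h : n ≤ m) : (pre x m).take n = pre x n := by
  simp only [pre, ← List.map_take, List.take_range, Nat.min_eq_left h]

lemma pre_succ (x : ℕ → ℕ) (n : ℕ) : pre x (n + 1) = pre x n ++ [x n] := by
  simp [pre, List.range_succ]

@[simp] lemma pre_getElem (x : ℕ → ℕ) {n i : ℕ} (h : i < n) :
    (pre x n)[i]'(by simpa using h) = x i := by
  simp [pre]

lemma eq_of_pre_eq {x y : ℕ → ℕ} {n : ℕ} (h : pre x n = pre y n) {i : ℕ} (hi : i < n) :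
    x i = y i := by
  have h' := congrArg (fun l : List ℕ => l.getD i 0) h
  simpa [pre, List.getD_eq_getElem?_getD, List.getElem?_map, List.getElem?_range hi] using h'

def Ns (s : List ℕ) : Set (ℕ → ℕ) := {x | pre x s.length = s}

lemma mem_Ns_pre (x : ℕ → ℕ) (n : ℕ) : x ∈ Ns (pre x n) := by
  simp [Ns]

lemma Ns_anti {s t : List ℕ} (h : s <+: t) : Ns t ⊆ Ns s := by
  intro x hx
  have hlen : s.length ≤ t.length := h.length_le
  have h2 : (pre x t.length).take s.length = s := by
    rw [hx]; exact (List.prefix_iff_eq_take.mp h).symm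
  show pre x s.length = s
  conv_rhs => rw [← h2]
  rw [pre_take x hlen]

lemma exists_branch {S : Set (List ℕ)} {σ : List ℕ} (hσ : σ ∈ S)
    (h : ∀ τ ∈ S, σ <+: τ → ∃ n, τ ++ [n] ∈ S) :
    ∃ x : ℕ → ℕ, ∀ n, ∃ τ ∈ S, pre x n <+: τ := by
  let t : ℕ → {l : List ℕ // l ∈ S ∧ σ <+: l} := fun n =>
    Nat.rec ⟨σ, hσ, List.prefix_refl σ⟩
      (fun _ p => ⟨p.1 ++ [Classical.choose (h p.1 p.2.1 p.2.2)],
        Classical.choose_spec (h p.1 p.2.1 p.2.2),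
        p.2.2.trans (List.prefix_append p.1 _)⟩) n
  have hlen : ∀ n, (t n).1.length = σ.length + n := by
    intro n; induction n with
    | zero => rfl
    | succ n ih =>
        show ((t n).1 ++ [_]).length = _
        simp [ih]; omega
  have hmono : ∀ m n, m ≤ n → (t m).1 <+: (t n).1 := by
    intro m n hmn
    induction hmn with
    | refl => exact List.prefix_refl _
    | step h' ih => exact ih.trans (List.prefix_append _ _)
  refine ⟨fun i => (t (i+1)).1.getD i 0, fun n => ⟨(t n).1, (t n).2.1, ?_⟩⟩
  have key : pre (fun i => (t (i+1)).1.getD i 0) n = (t n).1.take n := by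
    apply List.ext_getElem
    · simp [hlen n]
    · intro i h1 h2
      rw [pre_getElem _ (by simpa using h1), List.getElem_take]
      have hit : i < (t (i+1)).1.length := by
        have := hlen (i+1); omega
      rw [List.getD_eq_getElem _ _ hit]
      exact (hmono (i+1) n (by simp at h1; omega)).getElem hit
  rw [key]
  exact List.take_prefix _ _

def pj (s : List ℕ) : List ℕ := s.map (fun n => (Nat.unpair n).1)

lemma pj_pre (x : ℕ → ℕ) (n : ℕ) :
    pj (pre x n) = pre (fun i => (Nat.unpair (x i)).1) n := by
  simp [pj, pre]

lemma pj_prefix {s t : List ℕ} (h : s <+: t) : pj s <+: pj t := h.map _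

@[simp] lemma pj_length (s : List ℕ) : (pj s).length = s.length := by simp [pj]

lemma pj_append (s : List ℕ) (n : ℕ) :
    pj (s ++ [n]) = pj s ++ [(Nat.unpair n).1] := by simp [pj]

section Range
variable {Y : Type} [MetricSpace Y] {g : (ℕ → ℕ) → Y}

lemma mem_range_iff (hg : Continuous g) (y : Y) :
    y ∈ range g ↔ ∃ x : ℕ → ℕ, ∀ n, y ∈ closure (g '' Ns (pre x n)) := by
  constructor
  · rintro ⟨x, rfl⟩
    exact ⟨x, fun n => subset_closure ⟨x, mem_Ns_pre x n, rfl⟩⟩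
  · rintro ⟨x, hx⟩
    have h : ∀ n : ℕ, ∃ z ∈ Ns (pre x n), dist y (g z) < 1/(n+1) := by
      intro n
      have := Metric.mem_closure_iff.mp (hx n) (1/(n+1)) (by positivity)
      rcases this with ⟨b, ⟨z, hz, rfl⟩, hd⟩
      exact ⟨z, hz, hd⟩
    choose z hzmem hzd using h
    have hz_tendsto : Filter.Tendsto z Filter.atTop (nhds x) := by
      rw [tendsto_pi_nhds]
      intro i
      apply Filter.Tendsto.congr' _ tendsto_const_nhds
      filter_upwards [Filter.eventually_gt_atTop i] with n hn
      have hmem := hzmem n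
      have : pre (z n) n = pre x n := by simpa [Ns, mem_setOf_eq] using hmem
      exact (eq_of_pre_eq this hn).symm
    have hgz : Filter.Tendsto (fun n => g (z n)) Filter.atTop (nhds (g x)) :=
      (hg.tendsto x).comp hz_tendsto
    have hdist : Filter.Tendsto (fun n : ℕ => dist y (g (z n))) Filter.atTop (nhds 0) :=
      squeeze_zero (fun n => dist_nonneg) (fun n => (hzd n).le)
        tendsto_one_div_add_atTop_nhds_zero_nat
    have hgy : Filter.Tendsto (fun n => g (z n)) Filter.atTop (nhds y) := by
      rw [tendsto_iff_dist_tendsto_zero]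
      simpa [dist_comm] using hdist
    exact ⟨x, tendsto_nhds_unique hgz hgy⟩

open Classical in
/-- The reduction map: the tree of pairs whose first coordinates follow a
sequence along which `y` is in the closure of the images of cylinders. -/
noncomputable def F (g : (ℕ → ℕ) → Y) (y : Y) : TreeOmega :=
  ⟨fun s => if y ∈ closure (g '' Ns (pj s)) then true else false, by
    intro σ τ hσ hpre
    change (if y ∈ closure (g '' Ns (pj σ)) then true else false) = true at hσ
    show (if y ∈ closure (g '' Ns (pj τ)) then true else false) = true
    by_cases hp : y ∈ closure (g '' Ns (pj σ))
    · rw [if_pos (closure_mono (image_mono (Ns_anti (pj_prefix hpre))) hp)]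
    · rw [if_neg hp] at hσ; exact absurd hσ (by simp)⟩

lemma F_spec (g : (ℕ → ℕ) → Y) (y : Y) (s : List ℕ) :
    (F g y).1 s = true ↔ y ∈ closure (g '' Ns (pj s)) := by
  simp [F]

lemma F_mem_iff (y : Y) :
    F g y ∈ laverFam ↔ ∃ x : ℕ → ℕ, ∀ n, y ∈ closure (g '' Ns (pre x n)) := by
  constructor
  · rintro ⟨S, ⟨hTree, σ, hσS, hsplit⟩, hsub⟩
    obtain ⟨x, hx⟩ := exists_branch hσS
      (fun τ h1 h2 => (hsplit τ h1 h2).nonempty)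
    refine ⟨fun i => (Nat.unpair (x i)).1, fun n => ?_⟩
    obtain ⟨τ, hτS, hpre⟩ := hx n
    have hτ : y ∈ closure (g '' Ns (pj τ)) := (F_spec g y τ).mp (hsub hτS)
    have : y ∈ closure (g '' Ns (pj (pre x n))) :=
      closure_mono (image_mono (Ns_anti (pj_prefix hpre))) hτ
    rwa [pj_pre] at this
  · rintro ⟨x, hx⟩
    refine ⟨{s | pj s = pre x s.length}, ⟨?_, [], ?_, ?_⟩, ?_⟩
    · intro σ hσ τ hτσ
      have h1 : pj τ <+: pj σ := pj_prefix hτσ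
      have h2 : pj τ = (pj σ).take (pj τ).length := List.prefix_iff_eq_take.mp h1
      show pj τ = pre x τ.length
      rw [h2, hσ, pj_length, pre_take x (by simpa using hτσ.length_le)]
    · show pj [] = pre x ([] : List ℕ).length
      simp [pj, pre]
    · intro τ hτ _
      apply Set.infinite_of_injective_forall_mem
        (f := fun k : ℕ => Nat.pair (x τ.length) k)
      · intro a b hab
        simpa using congrArg (fun m => (Nat.unpair m).2) hab
      · intro k
        show pj (τ ++ [Nat.pair (x τ.length) k]) =
          pre x (τ ++ [Nat.pair (x τ.length) k]).length
        rw [pj_append, hτ, Nat.unpair_pair]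
        simp [pre_succ]
    · intro s hs
      show (F g y).1 s = true
      rw [F_spec]
      rw [show pj s = pre x s.length from hs]
      exact hx s.length

end Range

end LaverAux


namespace LaverAux

open Set

lemma infinite_iff (s : Set ℕ) : s.Infinite ↔ ∀ m, ∃ n, m ≤ n ∧ n ∈ s := by
  constructor
  · intro h m
    obtain ⟨n, hn, hmn⟩ := h.exists_gt m
    exact ⟨n, hmn.le, hn⟩
  · intro h
    apply Set.infinite_of_forall_exists_gt
    intro a
    obtain ⟨n, h1, h2⟩ := h (a+1)
    exact ⟨n, h2, by omega⟩

lemma isClosed_treeOmega :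
    IsClosed {x : List ℕ → Bool | ∀ σ τ : List ℕ, x σ = true → τ <+: σ → x τ = true} := by
  have hc : ∀ s : List ℕ, IsClopen {x : List ℕ → Bool | x s = true} := fun s =>
    (isClopen_discrete {true}).preimage (continuous_apply s)
  have : {x : List ℕ → Bool | ∀ σ τ : List ℕ, x σ = true → τ <+: σ → x τ = true}
      = ⋂ (σ : List ℕ) (τ : List ℕ), {x | x σ = true → τ <+: σ → x τ = true} := by
    ext x; simp
  rw [this]
  refine isClosed_iInter fun σ => isClosed_iInter fun τ => ?_
  by_cases h : τ <+: σ
  · have : {x : List ℕ → Bool | x σ = true → τ <+: σ → x τ = true}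
        = {x | x σ = true}ᶜ ∪ {x | x τ = true} := by
      ext x; simp [h, imp_iff_not_or]
    rw [this]
    exact ((hc σ).compl.isClosed).union (hc τ).isClosed
  · have : {x : List ℕ → Bool | x σ = true → τ <+: σ → x τ = true} = univ := by
      ext x; simp [h]
    rw [this]; exact isClosed_univ

instance : PolishSpace TreeOmega :=
  haveI : PolishSpace (List ℕ → Bool) := PolishSpace.mk
  isClosed_treeOmega.polishSpace

instance : BorelSpace TreeOmega :=
  Subtype.borelSpace {x : List ℕ → Bool | ∀ σ τ : List ℕ, x σ = true → τ <+: σ → x τ = true}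

lemma measurableSet_setOf_imp {α : Type*} [MeasurableSpace α] {p q : α → Prop}
    (hp : MeasurableSet {a | p a}) (hq : MeasurableSet {a | q a}) :
    MeasurableSet {a | p a → q a} := by
  have : {a | p a → q a} = {a | p a}ᶜ ∪ {a | q a} := by ext a; simp [imp_iff_not_or]
  rw [this]; exact hp.compl.union hq

abbrev P : Type := TreeOmega × (List ℕ → Bool)

lemma m2 (s : List ℕ) : MeasurableSet {p : P | p.2 s = true} := by
  have : Measurable fun p : P => p.2 s := (measurable_pi_apply s).comp measurable_snd
  exact this (measurableSet_singleton true)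

lemma m1 (s : List ℕ) : MeasurableSet {p : P | p.1.1 s = true} := by
  have : Measurable fun p : P => p.1.1 s :=
    (measurable_pi_apply s).comp (measurable_subtype_coe.comp measurable_fst)
  exact this (measurableSet_singleton true)

theorem analytic_laverFam : AnalyticSet laverFam := by
  classical
  let D : Set P := {p | (∀ σ τ : List ℕ, p.2 σ = true → τ <+: σ → p.2 τ = true) ∧
    ((∃ σ, p.2 σ = true ∧ ∀ τ, p.2 τ = true → σ <+: τ →
        ∀ m, ∃ n, m ≤ n ∧ p.2 (τ ++ [n]) = true) ∧
      (∀ σ, p.2 σ = true → p.1.1 σ = true))}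
  have hA : MeasurableSet {p : P | ∀ σ τ : List ℕ, p.2 σ = true → τ <+: σ → p.2 τ = true} := by
    rw [Set.setOf_forall]
    refine MeasurableSet.iInter fun σ => ?_
    rw [Set.setOf_forall]
    refine MeasurableSet.iInter fun τ => ?_
    exact measurableSet_setOf_imp (m2 σ)
      (measurableSet_setOf_imp (MeasurableSet.const _) (m2 τ))
  have hB : MeasurableSet {p : P | ∃ σ, p.2 σ = true ∧ ∀ τ, p.2 τ = true → σ <+: τ →
      ∀ m, ∃ n, m ≤ n ∧ p.2 (τ ++ [n]) = true} := by
    rw [Set.setOf_exists]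
    refine MeasurableSet.iUnion fun σ => ?_
    rw [Set.setOf_and]
    refine (m2 σ).inter ?_
    rw [Set.setOf_forall]
    refine MeasurableSet.iInter fun τ => ?_
    refine measurableSet_setOf_imp (m2 τ) ?_
    refine measurableSet_setOf_imp (MeasurableSet.const _) ?_
    rw [Set.setOf_forall]
    refine MeasurableSet.iInter fun m => ?_
    rw [Set.setOf_exists]
    refine MeasurableSet.iUnion fun n => ?_
    rw [Set.setOf_and]
    exact (MeasurableSet.const _).inter (m2 (τ ++ [n]))
  have hC : MeasurableSet {p : P | ∀ σ, p.2 σ = true → p.1.1 σ = true} := by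
    rw [Set.setOf_forall]
    refine MeasurableSet.iInter fun σ => ?_
    exact measurableSet_setOf_imp (m2 σ) (m1 σ)
  have hD : MeasurableSet D := hA.inter (hB.inter hC)
  have him : laverFam = Prod.fst '' D := by
    ext T
    constructor
    · rintro ⟨S, ⟨hT, σ, hσ, hsp⟩, hsub⟩
      have hχ : ∀ s : List ℕ, ((if s ∈ S then true else false) = true) ↔ s ∈ S := by
        intro s; by_cases h : s ∈ S <;> simp [h]
      refine ⟨⟨T, fun s => if s ∈ S then true else false⟩, ⟨?_, ⟨σ, ?_, ?_⟩, ?_⟩, rfl⟩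
      · intro σ' τ h1 h2
        exact (hχ τ).mpr (hT σ' ((hχ σ').mp h1) τ h2)
      · exact (hχ σ).mpr hσ
      · intro τ hτ hp m
        obtain ⟨n, hmn, hn⟩ := (infinite_iff _).mp (hsp τ ((hχ τ).mp hτ) hp) m
        exact ⟨n, hmn, (hχ _).mpr hn⟩
      · intro σ' h
        exact hsub ((hχ σ').mp h)
    · rintro ⟨⟨T', χ⟩, ⟨h1, ⟨σ, hσ, hsp⟩, h3⟩, rfl⟩
      refine ⟨{s | χ s = true}, ⟨?_, σ, hσ, ?_⟩, h3⟩
      · intro σ' hσ' τ hτ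
        exact h1 σ' τ hσ' hτ
      · intro τ hτ hpre
        rw [infinite_iff]
        exact hsp τ hτ hpre
  rw [him]
  haveI : PolishSpace (List ℕ → Bool) := PolishSpace.mk
  haveI : PolishSpace P := PolishSpace.mk
  exact hD.analyticSet.image_of_continuous continuous_fst

end LaverAux

/-- The family of trees containing a Laver tree is `Σ¹₁`-complete: it is analytic,
and every analytic subset of every Polish space Borel-reduces to it. -/
theorem laverFam_analytic_complete :
    AnalyticSet laverFam ∧
      ∀ (Y : Type) [TopologicalSpace Y] [PolishSpace Y]
        [MeasurableSpace Y] [BorelSpace Y] (B : Set Y),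
        AnalyticSet B →
          ∃ f : Y → TreeOmega, Measurable f ∧ f ⁻¹' laverFam = B := by
  constructor
  · exact LaverAux.analytic_laverFam
  · intro Y _ _ _ _ B hB
    rw [MeasureTheory.AnalyticSet_def] at hB
    rcases hB with rfl | ⟨g, hg, rfl⟩
    · refine ⟨fun _ => ⟨fun _ => false, by intros; simp_all⟩, measurable_const, ?_⟩
      ext y
      simp only [Set.mem_preimage, Set.mem_empty_iff_false, iff_false]
      rintro ⟨S, ⟨_, σ, hσ, _⟩, hsub⟩
      simpa using hsub hσ
    · letI := TopologicalSpace.upgradeIsCompletelyMetrizable Y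
      refine ⟨LaverAux.F g, ?_, ?_⟩
      · apply Measurable.subtype_mk
        apply measurable_pi_lambda
        intro s
        exact Measurable.ite isClosed_closure.measurableSet
          measurable_const measurable_const
      · ext y
        simp only [Set.mem_preimage]
        rw [LaverAux.F_mem_iff y, ← LaverAux.mem_range_iff hg y]
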